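/- arXiv:1110.5915 — 3 statements merged into one kernel-verified Lean document; each statement's English description precedes it below -/
import Mathlib

section
/- Let A be an m×n matrix over F_2 and b ∈ F_2^m, where the sum of all rows of A is zero, no proper nonempty subset of rows of A sums to zero, and the sum of the entries of b equals 1. Then for every x ∈ F_2^n at least one equation of Ax = b is falsified, and moreover for every index i ∈ {1,...,m} there exists x ∈ F_2^n satisfying all equations of Ax = b except possibly the i-th one (in fact falsifying exactly the i-th). -/
theorem stmt_13 (m n : ℕ) (A : Matrix (Fin m) (Fin n) (ZMod 2)) (b : Fin m → ZMod 2)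
    (hsum : ∑ i, A i = 0)
    (hsub : ∀ s : Finset (Fin m), s.Nonempty → s ≠ Finset.univ → ∑ i ∈ s, A i ≠ 0)
    (hb : ∑ i, b i = 1) :
    (∀ x : Fin n → ZMod 2, ∃ j, A.mulVec x j ≠ b j) ∧
    (∀ i : Fin m, ∃ x : Fin n → ZMod 2, ∀ j, A.mulVec x j ≠ b j ↔ j = i) := by
  constructor
  · intro x
    by_contra h
    push_neg at h
    have h1 : ∑ j, A.mulVec x j = 1 := by
      rw [Finset.sum_congr rfl fun j _ => h j, hb]
    have h0 : ∑ j, A.mulVec x j = 0 := by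
      simp only [Matrix.mulVec, dotProduct]
      rw [Finset.sum_comm]
      have hk : ∀ k, ∑ j, A j k * x k = (∑ j, A j) k * x k := by
        intro k; rw [← Finset.sum_mul]; congr 1; exact (Finset.sum_apply k _ _).symm
      simp only [hk, hsum]
      simp
    rw [h0] at h1
    exact one_ne_zero h1.symm
  · intro i
    set b' : Fin m → ZMod 2 := fun j => b j + if j = i then 1 else 0 with hb'
    have hmem : b' ∈ LinearMap.range (Matrix.mulVecLin A) := by
      by_contra hx
      obtain ⟨f, hf0, hfbot⟩ :=
        (LinearMap.range (Matrix.mulVecLin A)).exists_dual_map_eq_bot_of_notMem hx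
          inferInstance
      set c : Fin m → ZMod 2 := fun j => f (Pi.single j 1) with hc
      have hfy : ∀ y : Fin m → ZMod 2, f y = ∑ j, y j * c j := by
        intro y
        have hy : y = ∑ j, y j • Pi.single j (1 : ZMod 2) := by
          ext k; simp [Pi.single_apply]
        conv_lhs => rw [hy]
        rw [map_sum]
        simp [hc, smul_eq_mul]
      have hker : ∀ x : Fin n → ZMod 2, f (A.mulVec x) = 0 := by
        intro x
        have hm : A.mulVec x ∈ LinearMap.range (Matrix.mulVecLin A) := ⟨x, rfl⟩
        have := Submodule.mem_map_of_mem (f := f) hm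
        rw [hfbot] at this
        simpa using this
      set s : Finset (Fin m) := Finset.univ.filter (fun j => c j = 1) with hs
      have hcs : ∀ j z, c j * z = if j ∈ s then z else 0 := by
        intro j z
        have h01 : c j = 0 ∨ c j = 1 := by
          have : ∀ a : ZMod 2, a = 0 ∨ a = 1 := by decide
          exact this (c j)
        rcases h01 with h0 | h1
        · have hj : c j ≠ 1 := by rw [h0]; decide
          simp [hs, hj, h0]
        · simp [hs, h1]
      have hvm : ∑ j ∈ s, A j = 0 := by
        ext k
        have h1 := hker (Pi.single k 1)
        rw [hfy] at h1
        have h2 : ∀ j, A.mulVec (Pi.single k 1) j = A j k := by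
          intro j; simp [Matrix.mulVec_single]
        simp only [h2] at h1
        have h3 : ∀ j, A j k * c j = if j ∈ s then A j k else 0 := by
          intro j; rw [mul_comm, hcs]
        simp only [h3] at h1
        rw [Finset.sum_ite_mem, Finset.univ_inter] at h1
        exact (Finset.sum_apply k s (fun j => A j)).trans (by simpa using h1)
      rcases eq_or_ne s ∅ with he | hne
      · -- c = 0, so f b' = 0
        have : f b' = 0 := by
          rw [hfy]
          apply Finset.sum_eq_zero
          intro j _
          have h01 : c j = 0 ∨ c j = 1 := by
            have : ∀ a : ZMod 2, a = 0 ∨ a = 1 := by decide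
            exact this (c j)
          rcases h01 with h0 | h1
          · simp [h0]
          · exfalso
            have hjs : j ∈ s := by simp [hs, h1]
            rw [he] at hjs; simp at hjs
        exact hf0 this
      · rcases eq_or_ne s Finset.univ with hu | hnu
        · -- c = 1 everywhere, f b' = ∑ b' = 0
          have hc1 : ∀ j, c j = 1 := by
            intro j
            have : j ∈ s := hu ▸ Finset.mem_univ j
            simpa [hs] using this
          have : f b' = 0 := by
            rw [hfy]
            simp only [hc1, mul_one, hb']
            rw [Finset.sum_add_distrib, hb, Finset.sum_ite_eq' Finset.univ i]
            simp
            decide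
          exact hf0 this
        · exact hsub s (Finset.nonempty_iff_ne_empty.mpr hne) hnu hvm
    obtain ⟨x, hx⟩ := hmem
    refine ⟨x, fun j => ?_⟩
    have hxj : A.mulVec x j = b' j := by rw [← hx]; rfl
    rw [hxj, hb']
    by_cases hj : j = i <;> simp [hj]
end

section
/- Consider a weighted system S of linear equations over F_2 in which each variable appears in at most 2 equations, and suppose two equations e_1, e_2 (with weights w_1, w_2) share a variable x_i. Let w* = min(w_1, w_2), and let S' be obtained from S by replacing e_1 and e_2 by their sum (over F_2) with weight w*. Then the minimum total weight of falsified equations over all assignments is the same for S and S'. -/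
open Finset

/-- Total weight of the equations among the index set `J` falsified by assignment `x`. -/
def falsifiedWeight {n m : ℕ} (I : Fin m → Finset (Fin n)) (b : Fin m → ZMod 2)
    (w : Fin m → ℕ) (J : Finset (Fin m)) (x : Fin n → ZMod 2) : ℕ :=
  ∑ j ∈ J.filter (fun j => ∑ i ∈ I j, x i ≠ b j), w j

lemma zmod2_flip (s b : ZMod 2) : s + 1 ≠ b ↔ ¬ (s ≠ b) := by revert s b; decide

lemma zmod2_xor (s₁ s₂ b₁ b₂ : ZMod 2) :
    (s₁ + s₂ ≠ b₁ + b₂) ↔ ¬((s₁ ≠ b₁) ↔ (s₂ ≠ b₂)) := by revert s₁ s₂ b₁ b₂; decide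

lemma sum_symmDiff_zmod2 {n : ℕ} (A B : Finset (Fin n)) (x : Fin n → ZMod 2) :
    ∑ i ∈ symmDiff A B, x i = ∑ i ∈ A, x i + ∑ i ∈ B, x i := by
  have h1 : ∑ i ∈ (A ∪ B) \ (A ∩ B), x i + ∑ i ∈ A ∩ B, x i = ∑ i ∈ A ∪ B, x i :=
    Finset.sum_sdiff (Finset.inter_subset_union)
  have h2 : ∑ i ∈ A ∪ B, x i + ∑ i ∈ A ∩ B, x i = ∑ i ∈ A, x i + ∑ i ∈ B, x i :=
    Finset.sum_union_inter
  have hsd : symmDiff A B = (A ∪ B) \ (A ∩ B) := by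
    simpa using symmDiff_eq_sup_sdiff_inf A B
  have hcc : ∀ c : ZMod 2, c + c = 0 := by decide
  rw [hsd]
  linear_combination h1 + h2 - hcc (∑ i ∈ A ∩ B, x i)

lemma decompW {n m : ℕ} (I : Fin m → Finset (Fin n)) (b : Fin m → ZMod 2)
    (w : Fin m → ℕ) (j₁ j₂ : Fin m) (hne : j₁ ≠ j₂) (x : Fin n → ZMod 2) :
    falsifiedWeight I b w Finset.univ x =
      falsifiedWeight I b w (Finset.univ \ {j₁, j₂}) x
        + (if ∑ i ∈ I j₁, x i ≠ b j₁ then w j₁ else 0)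
        + (if ∑ i ∈ I j₂, x i ≠ b j₂ then w j₂ else 0) := by
  unfold falsifiedWeight
  rw [Finset.sum_filter, Finset.sum_filter,
    ← Finset.sum_sdiff (Finset.subset_univ ({j₁, j₂} : Finset (Fin m))),
    Finset.sum_pair hne]
  ring

theorem stmt_15 (n m : ℕ) (I : Fin m → Finset (Fin n)) (b : Fin m → ZMod 2)
    (w : Fin m → ℕ) (hw : ∀ j, 0 < w j)
    (hdeg : ∀ i : Fin n, (Finset.univ.filter (fun j => i ∈ I j)).card ≤ 2)
    (j₁ j₂ : Fin m) (hne : j₁ ≠ j₂) (i₀ : Fin n) (h₁ : i₀ ∈ I j₁) (h₂ : i₀ ∈ I j₂) :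
    sInf {W | ∃ x : Fin n → ZMod 2, W = falsifiedWeight I b w Finset.univ x} =
    sInf {W | ∃ x : Fin n → ZMod 2,
      W = falsifiedWeight I b w (Finset.univ \ {j₁, j₂}) x +
          (if ∑ i ∈ symmDiff (I j₁) (I j₂), x i ≠ b j₁ + b j₂
            then min (w j₁) (w j₂) else 0)} := by
  classical
  set f : (Fin n → ZMod 2) → ℕ := fun x => falsifiedWeight I b w Finset.univ x with hf
  set g : (Fin n → ZMod 2) → ℕ := fun x =>
    falsifiedWeight I b w (Finset.univ \ {j₁, j₂}) x +
      (if ∑ i ∈ symmDiff (I j₁) (I j₂), x i ≠ b j₁ + b j₂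
        then min (w j₁) (w j₂) else 0) with hg
  -- i₀ occurs only in equations j₁ and j₂
  have hnot : ∀ j, j ≠ j₁ → j ≠ j₂ → i₀ ∉ I j := by
    intro j hj1 hj2 hmem
    have hsub : ({j₁, j₂, j} : Finset (Fin m)) ⊆
        Finset.univ.filter (fun j => i₀ ∈ I j) := by
      intro a ha
      simp only [Finset.mem_insert, Finset.mem_singleton] at ha
      rcases ha with rfl | rfl | rfl <;> simp [h₁, h₂, hmem]
    have hcard : ({j₁, j₂, j} : Finset (Fin m)).card = 3 := by
      rw [Finset.card_insert_of_notMem (by simp [hne, hj1.symm]),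
        Finset.card_insert_of_notMem (by simp [hj2.symm]), Finset.card_singleton]
    have := Finset.card_le_card hsub
    have := hdeg i₀
    omega
  have hi₀sd : i₀ ∉ symmDiff (I j₁) (I j₂) := by
    rw [Finset.mem_symmDiff]
    push_neg
    exact ⟨fun _ => h₂, fun _ => h₁⟩
  -- flipping x at i₀
  have key : ∀ x : Fin n → ZMod 2,
      let x' := Function.update x i₀ (x i₀ + 1)
      g x' = g x ∧ g x ≤ f x ∧ min (f x) (f x') ≤ g x := by
    intro x
    intro x'
    have hupd : ∀ s : Finset (Fin n), i₀ ∉ s → ∑ i ∈ s, x' i = ∑ i ∈ s, x i := by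
      intro s hs
      refine Finset.sum_congr rfl fun i hi => ?_
      exact Function.update_of_ne (by rintro rfl; exact hs hi) _ _
    have hupd2 : ∀ s : Finset (Fin n), i₀ ∈ s → ∑ i ∈ s, x' i = (∑ i ∈ s, x i) + 1 := by
      intro s hs
      rw [← Finset.add_sum_erase _ x' hs, ← Finset.add_sum_erase _ x hs]
      have h1 : x' i₀ = x i₀ + 1 := Function.update_self _ _ _
      have h2 : ∑ i ∈ s.erase i₀, x' i = ∑ i ∈ s.erase i₀, x i := by
        refine Finset.sum_congr rfl fun i hi => ?_
        exact Function.update_of_ne (Finset.ne_of_mem_erase hi) _ _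
      rw [h1, h2]; ring
    have hrest : falsifiedWeight I b w (Finset.univ \ {j₁, j₂}) x' =
        falsifiedWeight I b w (Finset.univ \ {j₁, j₂}) x := by
      unfold falsifiedWeight
      congr 1
      refine Finset.filter_congr fun j hj => ?_
      simp only [Finset.mem_sdiff, Finset.mem_insert, Finset.mem_singleton] at hj
      rw [hupd (I j) (hnot j (fun h => hj.2 (Or.inl h)) (fun h => hj.2 (Or.inr h)))]
    have hsd : ∑ i ∈ symmDiff (I j₁) (I j₂), x' i = ∑ i ∈ symmDiff (I j₁) (I j₂), x i :=
      hupd _ hi₀sd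
    have hgg : g x' = g x := by
      rw [hg]; simp only [hrest, hsd]
    refine ⟨hgg, ?_, ?_⟩
    · -- g x ≤ f x
      rw [hf, hg]
      simp only [decompW I b w j₁ j₂ hne x, sum_symmDiff_zmod2]
      by_cases hP₁ : ∑ i ∈ I j₁, x i ≠ b j₁ <;>
        by_cases hP₂ : ∑ i ∈ I j₂, x i ≠ b j₂ <;>
          simp [hP₁, hP₂, zmod2_xor] <;> omega
    · -- min (f x) (f x') ≤ g x
      rw [hf, hg]
      have hfx' : falsifiedWeight I b w Finset.univ x' =
          falsifiedWeight I b w (Finset.univ \ {j₁, j₂}) x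
            + (if ¬ (∑ i ∈ I j₁, x i ≠ b j₁) then w j₁ else 0)
            + (if ¬ (∑ i ∈ I j₂, x i ≠ b j₂) then w j₂ else 0) := by
        rw [decompW I b w j₁ j₂ hne x', hrest, hupd2 _ h₁, hupd2 _ h₂]
        simp only [zmod2_flip]
      beta_reduce
      rw [hfx', decompW I b w j₁ j₂ hne x]
      simp only [sum_symmDiff_zmod2]
      by_cases hP₁ : ∑ i ∈ I j₁, x i ≠ b j₁ <;>
        by_cases hP₂ : ∑ i ∈ I j₂, x i ≠ b j₂ <;>
          simp [hP₁, hP₂, zmod2_xor] <;> omega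
  have hAne : {W | ∃ x : Fin n → ZMod 2, W = f x}.Nonempty := ⟨f 0, 0, rfl⟩
  have hBne : {W | ∃ x : Fin n → ZMod 2, W = g x}.Nonempty := ⟨g 0, 0, rfl⟩
  apply le_antisymm
  · obtain ⟨x, hx⟩ := Nat.sInf_mem hBne
    set x' := Function.update x i₀ (x i₀ + 1) with hx'
    have hk := key x
    rw [hx]
    calc sInf {W | ∃ x : Fin n → ZMod 2, W = f x} ≤ min (f x) (f x') :=
          le_min (Nat.sInf_le ⟨x, rfl⟩) (Nat.sInf_le ⟨x', rfl⟩)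
      _ ≤ g x := hk.2.2
  · obtain ⟨x, hx⟩ := Nat.sInf_mem hAne
    rw [hx]
    calc sInf {W | ∃ x : Fin n → ZMod 2, W = g x} ≤ g x := Nat.sInf_le ⟨x, rfl⟩
      _ ≤ f x := (key x).2.1
end

section
/- Let S be a system of equations over F_2 containing the equation x_i + x_j = 0 with weight w, and let S' be obtained from S by replacing this equation with the two equations x_i + y = 1 and x_j + y = 1, each of weight w, where y is a new variable not occurring in S. Then the minimum total weight of falsified equations over all assignments is the same for S and S'. -/
open Finset

lemma fw_split {n m : ℕ} (I : Fin m → Finset (Fin n)) (b : Fin m → ZMod 2)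
    (w : Fin m → ℕ) (j₀ : Fin m) (x : Fin n → ZMod 2) :
    falsifiedWeight I b w Finset.univ x =
    falsifiedWeight I b w (Finset.univ.erase j₀) x +
      (if ∑ i ∈ I j₀, x i ≠ b j₀ then w j₀ else 0) := by
  unfold falsifiedWeight
  rw [Finset.sum_filter, Finset.sum_filter,
    ← Finset.insert_erase (Finset.mem_univ j₀),
    Finset.sum_insert (Finset.notMem_erase _ _), add_comm,
    Finset.erase_insert (Finset.notMem_erase _ _)]

theorem stmt_16 (n m : ℕ) (I : Fin m → Finset (Fin n)) (b : Fin m → ZMod 2)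
    (w : Fin m → ℕ) (hw : ∀ j, 0 < w j)
    (j₀ : Fin m) (i₁ i₂ : Fin n) (hne : i₁ ≠ i₂)
    (hI : I j₀ = {i₁, i₂}) (hb : b j₀ = 0) :
    sInf {W | ∃ x : Fin n → ZMod 2, W = falsifiedWeight I b w Finset.univ x} =
    sInf {W | ∃ x : Fin n → ZMod 2, ∃ y : ZMod 2,
      W = falsifiedWeight I b w (Finset.univ.erase j₀) x +
          (if x i₁ + y ≠ 1 then w j₀ else 0) +
          (if x i₂ + y ≠ 1 then w j₀ else 0)} := by
  have hsum : ∀ x : Fin n → ZMod 2, ∑ i ∈ I j₀, x i = x i₁ + x i₂ := by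
    intro x; rw [hI, Finset.sum_pair hne]
  have split : ∀ x : Fin n → ZMod 2,
      falsifiedWeight I b w Finset.univ x =
      falsifiedWeight I b w (Finset.univ.erase j₀) x +
        (if x i₁ + x i₂ ≠ 0 then w j₀ else 0) := by
    intro x
    rw [fw_split I b w j₀ x, hsum, hb]
  have hA : {W | ∃ x : Fin n → ZMod 2, W = falsifiedWeight I b w Finset.univ x}.Nonempty :=
    ⟨_, fun _ => 0, rfl⟩
  have hB : {W | ∃ x : Fin n → ZMod 2, ∃ y : ZMod 2,
      W = falsifiedWeight I b w (Finset.univ.erase j₀) x +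
          (if x i₁ + y ≠ 1 then w j₀ else 0) +
          (if x i₂ + y ≠ 1 then w j₀ else 0)}.Nonempty :=
    ⟨_, fun _ => 0, 0, rfl⟩
  apply le_antisymm
  · obtain ⟨x, y, hxy⟩ := Nat.sInf_mem hB
    rw [hxy]
    refine le_trans (Nat.sInf_le ⟨x, rfl⟩) ?_
    rw [split x]
    have key : (if x i₁ + x i₂ ≠ 0 then w j₀ else 0) ≤
        (if x i₁ + y ≠ 1 then w j₀ else 0) + (if x i₂ + y ≠ 1 then w j₀ else 0) := by
      by_cases h : x i₁ + x i₂ = 0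
      · simp [h]
      · have : x i₁ + y ≠ 1 ∨ x i₂ + y ≠ 1 := by
          revert h
          have : ∀ a c z : ZMod 2, a + c ≠ 0 → (a + z ≠ 1 ∨ c + z ≠ 1) := by decide
          exact this (x i₁) (x i₂) y
        rcases this with h' | h'
        · simp [h, h']
        · simp [h, h']
          try omega
    rw [add_assoc]
    exact Nat.add_le_add_left key _
  · obtain ⟨x, hx⟩ := Nat.sInf_mem hA
    rw [hx]
    refine le_trans (Nat.sInf_le ⟨x, x i₁ + 1, rfl⟩) ?_
    rw [split x]
    have h1 : x i₁ + (x i₁ + 1) = 1 := by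
      have : ∀ a : ZMod 2, a + (a + 1) = 1 := by decide
      exact this _
    have h2 : (x i₂ + (x i₁ + 1) ≠ 1) ↔ (x i₁ + x i₂ ≠ 0) := by
      have : ∀ a c : ZMod 2, (c + (a + 1) ≠ 1) ↔ (a + c ≠ 0) := by decide
      exact this _ _
    simp [h1, h2]
end
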